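/- Let W be a real symmetric n×n matrix, U an orthogonal matrix and D a diagonal matrix with UᵀWU = D and all diagonal entries of D in [0,1]. Let k be the number of indices i with D_{ii} = 0 and suppose exactly one index j has D_{jj} = 1. Then for every s ∈ ℝⁿ and every N ≥ 1, ‖(I−W)^N·s − (I−W)^{N+1}·s‖₂ ≤ √(n−1−k)·(N^N/(N+1)^{N+1})·‖Uᵀs‖_∞, where ‖·‖₂ is the Euclidean norm and ‖·‖_∞ the maximum norm. -/

import Mathlib

open scoped Matrix
open Matrix Finset

lemma amgm18 (N : ℕ) (hN : 1 ≤ N) {d : ℝ} (h0 : 0 ≤ d) (h1 : d ≤ 1) :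
    (1 - d) ^ N * d ≤ (N : ℝ) ^ N / ((N : ℝ) + 1) ^ (N + 1) := by
  have hNpos : (0:ℝ) < N := by exact_mod_cast hN
  have hN1 : (0:ℝ) < (N:ℝ) + 1 := by positivity
  set w₁ : ℝ := N / ((N:ℝ) + 1) with hw₁
  set w₂ : ℝ := 1 / ((N:ℝ) + 1) with hw₂
  have hw : w₁ + w₂ = 1 := by rw [hw₁, hw₂]; field_simp
  have hp₁ : (0:ℝ) ≤ 1 - d := by linarith
  have hp₂ : (0:ℝ) ≤ (N:ℝ) * d := by positivity
  have h := Real.geom_mean_le_arith_mean2_weighted (by positivity) (by positivity) hp₁ hp₂ hw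
  have hrhs : w₁ * (1 - d) + w₂ * ((N:ℝ) * d) = (N:ℝ) / ((N:ℝ)+1) := by
    rw [hw₁, hw₂]; field_simp; ring
  rw [hrhs] at h
  have h2 := pow_le_pow_left₀ (by positivity) h (N + 1)
  have e1 : w₁ * ((N + 1 : ℕ) : ℝ) = (N : ℝ) := by push_cast; rw [hw₁]; field_simp
  have e2 : w₂ * ((N + 1 : ℕ) : ℝ) = 1 := by push_cast; rw [hw₂]; field_simp
  have hL : ((1 - d) ^ w₁ * ((N:ℝ) * d) ^ w₂) ^ (N + 1) = (1 - d) ^ N * ((N:ℝ) * d) := by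
    rw [mul_pow, ← Real.rpow_natCast ((1 - d) ^ w₁) (N + 1),
      ← Real.rpow_natCast (((N:ℝ) * d) ^ w₂) (N + 1),
      ← Real.rpow_mul hp₁, ← Real.rpow_mul hp₂, e1, e2, Real.rpow_one,
      Real.rpow_natCast]
  rw [hL, div_pow] at h2
  have h3 : (N:ℝ) * ((1 - d) ^ N * d) ≤ (N:ℝ) * ((N : ℝ) ^ N / ((N : ℝ) + 1) ^ (N + 1)) := by
    have hNN : ((N:ℝ)) ^ (N + 1) = (N:ℝ) * (N:ℝ) ^ N := by ring
    calc (N:ℝ) * ((1 - d) ^ N * d) = (1 - d) ^ N * ((N:ℝ) * d) := by ring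
      _ ≤ (N:ℝ) ^ (N+1) / ((N:ℝ)+1) ^ (N+1) := h2
      _ = (N:ℝ) * ((N : ℝ) ^ N / ((N : ℝ) + 1) ^ (N + 1)) := by rw [hNN]; ring
  exact le_of_mul_le_mul_left h3 hNpos


/-- Let `W` be a real symmetric `n×n` matrix, `U` orthogonal and `D` diagonal with
`Uᵀ W U = D` and all diagonal entries of `D` in `[0,1]`. Let `k` be the number of indices
`i` with `D i i = 0` and suppose exactly one index has diagonal entry `1`. Then for every
`s ∈ ℝⁿ` and every `N ≥ 1`,
`‖(I-W)^N s - (I-W)^(N+1) s‖₂ ≤ √(n-1-k) · (N^N/(N+1)^(N+1)) · ‖Uᵀ s‖_∞`,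
where `‖·‖₂` is the Euclidean norm and `‖·‖_∞` the maximum norm. -/
theorem stmt18 (n : ℕ) (W U D : Matrix (Fin n) (Fin n) ℝ) (hsym : W.IsSymm)
    (hU : Uᵀ * U = 1) (hD : D.IsDiag) (hUWU : Uᵀ * W * U = D)
    (hrange : ∀ i : Fin n, D i i ∈ Set.Icc (0 : ℝ) 1)
    (k : ℕ) (hk : k = (Finset.univ.filter (fun i : Fin n => D i i = 0)).card)
    (hone : ∃! j : Fin n, D j j = 1) :
    ∀ s : Fin n → ℝ, ∀ N : ℕ, 1 ≤ N →
      Real.sqrt (∑ i : Fin n,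
          (((((1 : Matrix (Fin n) (Fin n) ℝ) - W) ^ N).mulVec s -
            ((((1 : Matrix (Fin n) (Fin n) ℝ) - W) ^ (N + 1))).mulVec s) i) ^ 2) ≤
        Real.sqrt ((n : ℝ) - 1 - (k : ℝ)) * ((N : ℝ) ^ N / (N + 1 : ℝ) ^ (N + 1)) *
          ‖Uᵀ.mulVec s‖ := by
  intro s N hN
  set d : Fin n → ℝ := fun i => D i i with hd
  have hUUT : U * Uᵀ = 1 := mul_eq_one_comm.mp hU
  have hmid : ∀ X : Matrix (Fin n) (Fin n) ℝ, Uᵀ * (U * X) = X := fun X => by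
    rw [← Matrix.mul_assoc, hU, Matrix.one_mul]
  have hW : W = U * D * Uᵀ := by
    rw [← hUWU]
    calc W = (U * Uᵀ) * W * (U * Uᵀ) := by rw [hUUT]; simp
      _ = U * (Uᵀ * W * U) * Uᵀ := by simp only [Matrix.mul_assoc]
  have hDdiag : D = Matrix.diagonal d := by
    ext i j
    by_cases h : i = j
    · subst h; simp [Matrix.diagonal_apply_eq, hd]
    · rw [Matrix.diagonal_apply_ne _ h, hD h]
  have h1W : (1 : Matrix (Fin n) (Fin n) ℝ) - W = U * (1 - D) * Uᵀ := by
    rw [Matrix.mul_sub, Matrix.sub_mul, Matrix.mul_one, hUUT, hW]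
  have hpow : ∀ m : ℕ, ((1 : Matrix (Fin n) (Fin n) ℝ) - W) ^ m =
      U * ((1 : Matrix (Fin n) (Fin n) ℝ) - D) ^ m * Uᵀ := by
    intro m
    induction m with
    | zero => simp [hUUT]
    | succ m ih =>
      rw [pow_succ, ih, h1W, pow_succ]
      simp only [Matrix.mul_assoc, hmid]
  have hMeq : ((1 : Matrix (Fin n) (Fin n) ℝ) - W) ^ N -
      ((1 : Matrix (Fin n) (Fin n) ℝ) - W) ^ (N + 1) =
      U * (((1 : Matrix (Fin n) (Fin n) ℝ) - D) ^ N * D) * Uᵀ := by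
    have e : ((1 : Matrix (Fin n) (Fin n) ℝ) - D) ^ (N + 1) =
        (1 - D) ^ N - (1 - D) ^ N * D := by
      rw [pow_succ, Matrix.mul_sub, Matrix.mul_one]
    rw [hpow N, hpow (N + 1), e, Matrix.mul_sub, Matrix.sub_mul]
    abel
  set m : Fin n → ℝ := fun i => (1 - d i) ^ N * d i with hm
  have hM' : ((1 : Matrix (Fin n) (Fin n) ℝ) - D) ^ N * D = Matrix.diagonal m := by
    rw [hDdiag, ← Matrix.diagonal_one, Matrix.diagonal_sub, Matrix.diagonal_pow,
      Matrix.diagonal_mul_diagonal]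
    exact congrArg Matrix.diagonal (funext fun i => by simp [hm, Pi.pow_apply])
  set t : Fin n → ℝ := Uᵀ.mulVec s with ht
  -- rewrite the vector inside the sum
  have hvec : (((1 : Matrix (Fin n) (Fin n) ℝ) - W) ^ N).mulVec s -
      (((1 : Matrix (Fin n) (Fin n) ℝ) - W) ^ (N + 1)).mulVec s =
      U.mulVec ((Matrix.diagonal m).mulVec t) := by
    rw [← Matrix.sub_mulVec, hMeq, hM', ht, ← Matrix.mulVec_mulVec, ← Matrix.mulVec_mulVec]
  rw [hvec]
  -- orthogonality: sum of squares preserved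
  have hsq : ∀ v : Fin n → ℝ, (∑ i, (U.mulVec v i) ^ 2) = ∑ i, (v i) ^ 2 := by
    intro v
    have : (U.mulVec v) ⬝ᵥ (U.mulVec v) = v ⬝ᵥ v := by
      rw [Matrix.dotProduct_mulVec, ← Matrix.mulVec_transpose, Matrix.mulVec_mulVec, hU,
        Matrix.one_mulVec]
    simpa [dotProduct, pow_two] using this
  rw [hsq]
  have hdiagv : ∀ i, (Matrix.diagonal m).mulVec t i = m i * t i := fun i =>
    Matrix.mulVec_diagonal m t i
  -- constants
  set c : ℝ := (N : ℝ) ^ N / ((N : ℝ) + 1) ^ (N + 1) with hc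
  have hc0 : 0 ≤ c := by positivity
  have hbnd : ∀ i : Fin n, 0 ≤ m i ∧ m i ≤ c := by
    intro i
    obtain ⟨h0, h1⟩ := hrange i
    constructor
    · have : 0 ≤ 1 - d i := by simp only [hd]; linarith
      positivity
    · exact amgm18 N hN h0 h1
  have htle : ∀ i : Fin n, |t i| ≤ ‖t‖ := fun i => by
    simpa [Real.norm_eq_abs] using norm_le_pi_norm t i
  -- restrict the sum to the good set
  set S : Finset (Fin n) := univ.filter (fun i => d i ≠ 0 ∧ d i ≠ 1) with hS
  have hzero : ∀ i ∈ univ, ((Matrix.diagonal m).mulVec t i) ^ 2 ≠ 0 →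
      (d i ≠ 0 ∧ d i ≠ 1) := by
    intro i _ hne
    rw [hdiagv i] at hne
    constructor
    · intro h; apply hne; simp [hm, h]
    · intro h; apply hne; simp [hm, h, zero_pow (by omega : N ≠ 0)]
  have hsum_eq : (∑ i : Fin n, ((Matrix.diagonal m).mulVec t i) ^ 2) =
      ∑ i ∈ S, ((Matrix.diagonal m).mulVec t i) ^ 2 :=
    (Finset.sum_filter_of_ne hzero).symm
  have hterm : ∀ i ∈ S, ((Matrix.diagonal m).mulVec t i) ^ 2 ≤ (c * ‖t‖) ^ 2 := by
    intro i _
    rw [hdiagv i]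
    have e1 : (m i * t i) ^ 2 = m i ^ 2 * t i ^ 2 := by ring
    have e2 : (c * ‖t‖) ^ 2 = c ^ 2 * ‖t‖ ^ 2 := by ring
    rw [e1, e2]
    obtain ⟨hm0, hmc⟩ := hbnd i
    have h1 : (m i) ^ 2 ≤ c ^ 2 := pow_le_pow_left₀ hm0 hmc 2
    have h2 : (t i) ^ 2 ≤ ‖t‖ ^ 2 := by
      rw [← sq_abs]
      exact pow_le_pow_left₀ (abs_nonneg _) (htle i) 2
    exact mul_le_mul h1 h2 (sq_nonneg _) (sq_nonneg _)
  have hsum_le : (∑ i ∈ S, ((Matrix.diagonal m).mulVec t i) ^ 2) ≤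
      S.card • ((c * ‖t‖) ^ 2) := Finset.sum_le_card_nsmul S _ _ hterm
  -- cardinality
  obtain ⟨j, hj, huniq⟩ := hone
  have hBcard : (univ.filter (fun i : Fin n => d i = 1)).card = 1 := by
    have : univ.filter (fun i : Fin n => d i = 1) = {j} := by
      ext i
      simp only [Finset.mem_filter, Finset.mem_univ, true_and, Finset.mem_singleton]
      exact ⟨fun h => huniq i h, fun h => h ▸ hj⟩
    rw [this, Finset.card_singleton]
  have hcard_nat : S.card + (k + 1) = n := by
    have hsplit := Finset.card_filter_add_card_filter_not
      (s := (univ : Finset (Fin n))) (p := fun i => d i ≠ 0 ∧ d i ≠ 1)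
    have hneg : (univ.filter (fun i : Fin n => ¬(d i ≠ 0 ∧ d i ≠ 1))).card = k + 1 := by
      have heq : (univ.filter (fun i : Fin n => ¬(d i ≠ 0 ∧ d i ≠ 1))) =
          (univ.filter (fun i : Fin n => d i = 0)) ∪ (univ.filter (fun i : Fin n => d i = 1)) := by
        ext i
        simp only [Finset.mem_filter, Finset.mem_union, Finset.mem_univ, true_and]
        tauto
      have hdisj : Disjoint (univ.filter (fun i : Fin n => d i = 0))
          (univ.filter (fun i : Fin n => d i = 1)) := by
        rw [Finset.disjoint_filter]
        intro i _ h0 h1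
        rw [h0] at h1
        norm_num at h1
      rw [heq, Finset.card_union_of_disjoint hdisj, hBcard, ← hk]
    rw [hneg] at hsplit
    simpa using hsplit
  have hcardR : (S.card : ℝ) = (n : ℝ) - 1 - (k : ℝ) := by
    have := hcard_nat
    have : ((S.card : ℝ) + ((k : ℝ) + 1)) = (n : ℝ) := by exact_mod_cast congrArg (Nat.cast : ℕ → ℝ) this
    linarith
  -- finish
  rw [hsum_eq]
  calc Real.sqrt (∑ i ∈ S, ((Matrix.diagonal m).mulVec t i) ^ 2)
      ≤ Real.sqrt (S.card • ((c * ‖t‖) ^ 2)) := Real.sqrt_le_sqrt hsum_le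
    _ = Real.sqrt ((n : ℝ) - 1 - (k : ℝ)) * (c * ‖t‖) := by
        rw [nsmul_eq_mul, hcardR, Real.sqrt_mul (by
          rw [← hcardR]; exact Nat.cast_nonneg _), Real.sqrt_sq (by positivity)]
    _ = Real.sqrt ((n : ℝ) - 1 - (k : ℝ)) * ((N : ℝ) ^ N / ((N : ℝ) + 1) ^ (N + 1)) * ‖t‖ := by
        rw [hc]; ring
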